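/- arXiv:2012.11042 — 6 statements merged into one kernel-verified Lean document; each statement's English description precedes it below -/
import Mathlib

section
/- Let α ∈ (0,1) and ω > 0. Then the improper integral of t^{-α} e^{-iωt} over (0,∞) converges in the sense that lim_{R→∞} ∫_0^R t^{-α} e^{-iωt} dt = Γ(1-α) · ω^{α-1} · exp(i π (α-1)/2), i.e. it equals Γ(1-α)·(iω)^{α-1} where (iω)^{α-1} is taken with the principal-type branch (iω)^β = |ω|^β exp(iπβ/2) for ω > 0. -/
open MeasureTheory Real Filter Set


noncomputable def fk (α : ℝ) (b : ℂ) (t : ℝ) : ℂ :=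
  ((t ^ (-α) : ℝ) : ℂ) * Complex.exp (-(b * t))

lemma norm_fk {α : ℝ} {b : ℂ} {t : ℝ} (ht : 0 < t) :
    ‖fk α b t‖ = t ^ (-α) * Real.exp (-(b.re * t)) := by
  rw [fk, norm_mul, Complex.norm_real, Real.norm_eq_abs,
    Complex.norm_exp]
  congr 1
  · exact abs_of_nonneg (Real.rpow_nonneg ht.le _)
  · congr 1
    simp [Complex.mul_re]

lemma contOn_fk (α : ℝ) (b : ℂ) : ContinuousOn (fk α b) (Ioi 0) := by
  intro t ht
  apply ContinuousAt.continuousWithinAt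
  apply ContinuousAt.mul
  · exact Complex.continuous_ofReal.continuousAt.comp
      (Real.continuousAt_rpow_const t _ (Or.inl (ne_of_gt ht)))
  · fun_prop

lemma meas_fk (α : ℝ) (b : ℂ) {s : Set ℝ} (hs : s ⊆ Ioi 0) (hm : MeasurableSet s) :
    AEStronglyMeasurable (fk α b) (volume.restrict s) :=
  ((contOn_fk α b).mono hs).aestronglyMeasurable hm

lemma integrable_fk {α : ℝ} (hα : α ∈ Ioo (0:ℝ) 1) {b : ℂ} (hb : 0 < b.re) :
    IntegrableOn (fk α b) (Ioi 0) := by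
  have hbd : IntegrableOn (fun t : ℝ => t ^ (-α) * Real.exp (-b.re * t)) (Ioi 0) := by
    have := integrableOn_rpow_mul_exp_neg_mul_rpow (p := 1) (s := -α) (b := b.re)
      (by linarith [hα.2]) zero_lt_one hb
    simpa using this
  refine (hbd.mono' (meas_fk α b le_rfl measurableSet_Ioi) ?_)
  filter_upwards [ae_restrict_mem measurableSet_Ioi] with t ht
  rw [norm_fk ht, neg_mul]

set_option maxHeartbeats 1000000 in
lemma hasDeriv_integral_fk {α : ℝ} (hα : α ∈ Ioo (0:ℝ) 1) {b₀ : ℂ} (hb : 0 < b₀.re) :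
    HasDerivAt (fun b => ∫ t in Ioi (0:ℝ), fk α b t)
      (∫ t in Ioi (0:ℝ), -((t : ℝ) : ℂ) * fk α b₀ t) b₀ := by
  set ε := b₀.re / 2 with hε
  have hε0 : 0 < ε := by positivity
  have key : ∀ b ∈ Metric.ball b₀ ε, ε ≤ b.re := by
    intro b hb'
    have h1 : |b.re - b₀.re| ≤ ‖b - b₀‖ := by
      simpa using Complex.abs_re_le_norm (b - b₀)
    have := Metric.mem_ball.mp hb'
    rw [dist_eq_norm] at this
    have := (abs_le.mp (h1.trans this.le)).1
    simp only [hε]; linarith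
  have hdiff : ∀ (t : ℝ), ∀ b ∈ Metric.ball b₀ ε,
      HasDerivAt (fun b => fk α b t) (-(t:ℂ) * fk α b t) b := by
    intro t b _
    have h1 : HasDerivAt (fun b : ℂ => -(b * (t:ℂ))) (-(t:ℂ)) b := by
      have := ((hasDerivAt_id b).mul_const (t:ℂ)).neg
      simp only [id, one_mul] at this
      exact this
    have h2 := (h1.cexp).const_mul ((t ^ (-α) : ℝ) : ℂ)
    exact h2.congr_deriv (by simp [fk]; ring)
  have hbound : ∀ᵐ (t : ℝ) ∂(volume.restrict (Ioi (0:ℝ))), ∀ b ∈ Metric.ball b₀ ε,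
      ‖-(t:ℂ) * fk α b t‖ ≤ t ^ (1 - α) * Real.exp (-ε * t) := by
    filter_upwards [ae_restrict_mem measurableSet_Ioi] with t ht b hb'
    rw [norm_mul, norm_fk ht]
    have h1 : ‖-(t:ℂ)‖ = t := by
      simp [abs_of_nonneg (le_of_lt (mem_Ioi.mp ht))]
    rw [h1]
    have h2 : t * (t ^ (-α) * Real.exp (-(b.re * t))) = t ^ (1-α) * Real.exp (-(b.re*t)) := by
      rw [show (1:ℝ) - α = 1 + (-α) by ring, Real.rpow_add ht, Real.rpow_one]
      ring
    rw [h2]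
    gcongr
    · exact Real.rpow_nonneg ht.le _
    · nlinarith [mul_le_mul_of_nonneg_right (key b hb') (le_of_lt (mem_Ioi.mp ht))]
  have hbi : Integrable (fun t : ℝ => t ^ (1-α) * Real.exp (-ε * t))
      (volume.restrict (Ioi (0:ℝ))) := by
    have := integrableOn_rpow_mul_exp_neg_mul_rpow (p := 1) (s := 1-α) (b := ε)
      (by linarith [hα.2]) zero_lt_one hε0
    simpa [IntegrableOn] using this
  have hmeas' : AEStronglyMeasurable (fun t : ℝ => -(t:ℂ) * fk α b₀ t)
      (volume.restrict (Ioi (0:ℝ))) := by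
    exact (Complex.continuous_ofReal.aestronglyMeasurable.neg).mul
      (meas_fk α b₀ le_rfl measurableSet_Ioi)
  exact (hasDerivAt_integral_of_dominated_loc_of_deriv_le (Metric.ball_mem_nhds b₀ hε0)
    (Eventually.of_forall fun b => meas_fk α b le_rfl measurableSet_Ioi)
    (integrable_fk hα hb) hmeas' hbound hbi
    (Eventually.of_forall hdiff)).2

lemma integral_fk {α : ℝ} (hα : α ∈ Ioo (0:ℝ) 1) {b : ℂ} (hb : 0 < b.re) :
    ∫ t in Ioi (0:ℝ), fk α b t = Complex.Gamma (1 - α) * b ^ ((α : ℂ) - 1) := by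
  set U : Set ℂ := {z : ℂ | 0 < z.re} with hU
  have hUopen : IsOpen U := by
    exact isOpen_lt continuous_const Complex.continuous_re
  have hUconn : IsPreconnected U := (convex_halfSpace_re_gt 0).isPreconnected
  have h1 : AnalyticOnNhd ℂ (fun b => ∫ t in Ioi (0:ℝ), fk α b t) U := by
    refine DifferentiableOn.analyticOnNhd ?_ hUopen
    intro z hz
    exact (hasDeriv_integral_fk hα hz).differentiableAt.differentiableWithinAt
  have h2 : AnalyticOnNhd ℂ (fun b => Complex.Gamma (1 - α) * b ^ ((α : ℂ) - 1)) U := by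
    refine DifferentiableOn.analyticOnNhd ?_ hUopen
    intro z hz
    refine DifferentiableAt.differentiableWithinAt ?_
    exact (differentiableAt_id.cpow (differentiableAt_const _)
      (Or.inl hz)).const_mul _
  have heq : ∀ x : ℝ, 0 < x → (∫ t in Ioi (0:ℝ), fk α (x:ℂ) t)
      = Complex.Gamma (1 - α) * (x:ℂ) ^ ((α : ℂ) - 1) := by
    intro x hx
    have := Complex.integral_cpow_mul_exp_neg_mul_Ioi
      (a := 1 - (α:ℂ)) (r := x) (by simp [hα.2]) hx
    have hL : ∀ t ∈ Ioi (0:ℝ), (t:ℂ) ^ ((1 - (α:ℂ)) - 1) * Complex.exp (-(x * t))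
        = fk α (x:ℂ) t := by
      intro t ht
      rw [fk, Complex.ofReal_cpow (le_of_lt ht),
        show (1 - (α:ℂ)) - 1 = ((-α : ℝ) : ℂ) by push_cast; ring]
    rw [setIntegral_congr_fun measurableSet_Ioi hL] at this
    rw [this]
    rw [mul_comm]
    congr 1
    rw [one_div, Complex.inv_cpow _ _ ?h, ← Complex.cpow_neg]
    · norm_num
    case h =>
      rw [Complex.arg_ofReal_of_nonneg hx.le]
      exact pi_ne_zero.symm
  have hfreq : ∃ᶠ z in nhdsWithin (1:ℂ) {(1:ℂ)}ᶜ,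
      (∫ t in Ioi (0:ℝ), fk α z t) = Complex.Gamma (1 - α) * z ^ ((α : ℂ) - 1) := by
    have hseq : Tendsto (fun n : ℕ => (((1 + (n+1 : ℝ)⁻¹ : ℝ)) : ℂ)) atTop
        (nhdsWithin (1:ℂ) {(1:ℂ)}ᶜ) := by
      rw [tendsto_nhdsWithin_iff]
      constructor
      · have h : Tendsto (fun n : ℕ => (1 + (n+1 : ℝ)⁻¹ : ℝ)) atTop (nhds 1) := by
          simpa using (tendsto_const_nhds (x := (1:ℝ))).add (tendsto_one_div_add_atTop_nhds_zero_nat)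
        have := (Complex.continuous_ofReal.tendsto 1).comp h
        exact this
      · filter_upwards with n
        simp only [mem_compl_iff, mem_singleton_iff, Complex.ofReal_eq_one]
        intro h
        have : (n+1:ℝ)⁻¹ = 0 := by linarith
        have h2 : (0:ℝ) < (n+1:ℝ)⁻¹ := by positivity
        linarith
    refine hseq.frequently (Frequently.of_forall fun n => ?_)
    exact heq (1 + (n+1:ℝ)⁻¹) (by positivity)
  have := AnalyticOnNhd.eqOn_of_preconnected_of_frequently_eq h1 h2 hUconn
    (by simp [hU] : (1:ℂ) ∈ U) hfreq
  exact this hb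

-- bound for the truncated interval integral, S ≥ R
lemma interval_bound {α : ℝ} (hα : α ∈ Ioo (0:ℝ) 1) {b : ℂ} (hb : 0 < b.re)
    {ω : ℝ} (hω : 0 < ω) (him : ω ≤ |b.im|) {R S : ℝ} (hR : 0 < R) (hRS : R ≤ S) :
    ‖∫ t in R..S, fk α b t‖ ≤ 3 * R ^ (-α) / ω := by
  have hb0 : b ≠ 0 := by
    intro h; rw [h] at hb; simp at hb
  have habs : ω ≤ ‖b‖ := le_trans him (Complex.abs_im_le_norm b)
  have huIcc : uIcc R S ⊆ Ioi 0 := by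
    rw [uIcc_of_le hRS]
    intro x hx
    exact lt_of_lt_of_le hR hx.1
  set u : ℝ → ℂ := fun t => ((t ^ (-α) : ℝ) : ℂ) with hu
  set u' : ℝ → ℂ := fun t => (((-α) * t ^ (-α - 1) : ℝ) : ℂ) with hu'
  set v : ℝ → ℂ := fun t => Complex.exp (-(b * t)) / (-b) with hv
  set v' : ℝ → ℂ := fun t => Complex.exp (-(b * t)) with hv'
  have hud : ∀ x ∈ uIcc R S, HasDerivAt u (u' x) x := by
    intro x hx
    exact (Real.hasDerivAt_rpow_const (Or.inl (ne_of_gt (huIcc hx)))).ofReal_comp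
  have hvd : ∀ x ∈ uIcc R S, HasDerivAt v (v' x) x := by
    intro x _
    have h1 : HasDerivAt (fun t : ℝ => -(b * (t:ℂ))) (-b) x := by
      have := (((Complex.ofRealCLM.hasDerivAt (x := x)).const_mul b).neg)
      simp only [Complex.ofRealCLM_apply, Complex.ofReal_one, mul_one] at this
      exact this
    have h2 := (h1.cexp).div_const (-b)
    exact h2.congr_deriv (by simp only [hv']; exact mul_div_cancel_right₀ _ (neg_ne_zero.mpr hb0))
  have hu'i : IntervalIntegrable u' volume R S := by
    apply ContinuousOn.intervalIntegrable
    intro x hx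
    exact ContinuousAt.continuousWithinAt (Complex.continuous_ofReal.continuousAt.comp
      ((Real.continuousAt_rpow_const x _ (Or.inl (ne_of_gt (huIcc hx)))).const_mul _))
  have hv'i : IntervalIntegrable v' volume R S := by
    apply Continuous.intervalIntegrable
    fun_prop
  have hibp := intervalIntegral.integral_mul_deriv_eq_deriv_mul hud hvd hu'i hv'i
  have hfk : ∀ t : ℝ, fk α b t = u t * v' t := fun t => rfl
  simp_rw [← hfk] at hibp
  rw [hibp]
  -- now bound the three pieces
  have hboundary : ∀ T : ℝ, 0 < T → ‖u T * v T‖ ≤ T ^ (-α) / ω := by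
    intro T hT
    rw [norm_mul, hu, hv]
    simp only [norm_div, norm_neg]
    rw [Complex.norm_real, Real.norm_eq_abs, Complex.norm_exp]
    have h1 : |T ^ (-α)| = T ^ (-α) := abs_of_nonneg (Real.rpow_nonneg hT.le _)
    rw [h1]
    have h2 : (-(b * T)).re = -(b.re * T) := by simp [Complex.mul_re]
    rw [h2]
    have h3 : Real.exp (-(b.re * T)) ≤ 1 := by
      rw [Real.exp_le_one_iff]
      nlinarith
    calc T ^ (-α) * (Real.exp (-(b.re * T)) / ‖b‖)
        ≤ T ^ (-α) * (1 / ω) := by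
          gcongr
      _ = T ^ (-α) / ω := by ring
  have hmid : ‖∫ t in R..S, u' t * v t‖ ≤ R ^ (-α) / ω := by
    have hptbd : ∀ t ∈ Icc R S, ‖u' t * v t‖ ≤ α * t ^ (-α - 1) / ω := by
      intro t ht
      have ht0 : 0 < t := lt_of_lt_of_le hR ht.1
      rw [norm_mul, hu', hv]
      simp only [norm_div, norm_neg]
      rw [Complex.norm_real, Real.norm_eq_abs, Complex.norm_exp]
      have h1 : |(-α) * t ^ (-α - 1)| = α * t ^ (-α-1) := by
        rw [abs_mul, abs_neg, abs_of_nonneg hα.1.le,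
          abs_of_nonneg (Real.rpow_nonneg ht0.le _)]
      rw [h1]
      have h2 : (-(b * t)).re = -(b.re * t) := by simp [Complex.mul_re]
      rw [h2]
      have h3 : Real.exp (-(b.re * t)) ≤ 1 := by
        rw [Real.exp_le_one_iff]; nlinarith
      calc α * t ^ (-α-1) * (Real.exp (-(b.re * t)) / ‖b‖)
          ≤ α * t ^ (-α-1) * (1 / ω) := by
            gcongr
            have := hα.1
            positivity
        _ = α * t ^ (-α-1) / ω := by ring
    have hgi : IntervalIntegrable (fun t => α * t ^ (-α - 1) / ω) volume R S := by
      apply ContinuousOn.intervalIntegrable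
      intro x hx
      rw [uIcc_of_le hRS] at hx
      have hx0 : 0 < x := lt_of_lt_of_le hR hx.1
      exact ContinuousAt.continuousWithinAt
        (((Real.continuousAt_rpow_const x _ (Or.inl hx0.ne')).const_mul _).div_const _)
    have hkey := intervalIntegral.norm_integral_le_of_norm_le hRS (by
      filter_upwards with t ht
      exact hptbd t ⟨le_of_lt ht.1, ht.2⟩) hgi
    have hcomp : ∫ t in R..S, α * t ^ (-α - 1) / ω = (α/ω) * ∫ t in R..S, t ^ (-α-1) := by
      rw [← intervalIntegral.integral_const_mul]
      congr 1; ext t; ring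
    rw [hcomp] at hkey
    refine hkey.trans ?_
    have hα0 : (0:ℝ) < α := hα.1
    have hint : ∫ t in R..S, t ^ (-α - 1) = (S ^ (-α) - R ^ (-α)) / (-α) := by
      rw [integral_rpow (Or.inr ⟨by intro h; linarith, by
        rw [uIcc_of_le hRS]; intro h; exact absurd h.1 (not_le.mpr hR)⟩)]
      norm_num
    rw [hint]
    have hSR : S ^ (-α) ≤ R ^ (-α) :=
      Real.rpow_le_rpow_of_nonpos hR hRS (by linarith)
    have heval : α / ω * ((S ^ (-α) - R ^ (-α)) / (-α)) = (R ^ (-α) - S ^ (-α)) / ω := by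
      field_simp
      ring
    rw [heval]
    have hS0 : (0:ℝ) ≤ S ^ (-α) := Real.rpow_nonneg (by linarith) _
    rw [div_le_div_iff₀ (by linarith) hω]
    nlinarith
  -- combine
  have hSR : S ^ (-α) ≤ R ^ (-α) :=
    Real.rpow_le_rpow_of_nonpos hR hRS (by linarith [hα.1])
  calc ‖u S * v S - u R * v R - ∫ t in R..S, u' t * v t‖
      ≤ ‖u S * v S - u R * v R‖ + ‖∫ t in R..S, u' t * v t‖ := norm_sub_le _ _
    _ ≤ (‖u S * v S‖ + ‖u R * v R‖) + ‖∫ t in R..S, u' t * v t‖ := by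
        gcongr
        exact norm_sub_le _ _
    _ ≤ (S ^ (-α) / ω + R ^ (-α) / ω) + R ^ (-α) / ω :=
        add_le_add (add_le_add (hboundary S (lt_of_lt_of_le hR hRS)) (hboundary R hR)) hmid
    _ ≤ 3 * R ^ (-α) / ω := by
        rw [← add_div, ← add_div, div_le_div_iff₀ hω hω]
        nlinarith

lemma tail_bound {α : ℝ} (hα : α ∈ Ioo (0:ℝ) 1) {b : ℂ} (hb : 0 < b.re)
    {ω : ℝ} (hω : 0 < ω) (him : ω ≤ |b.im|) {R : ℝ} (hR : 0 < R) :
    ‖∫ t in Ioi R, fk α b t‖ ≤ 3 * R ^ (-α) / ω := by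
  have hint : IntegrableOn (fk α b) (Ioi R) :=
    (integrable_fk hα hb).mono_set (Ioi_subset_Ioi hR.le)
  have htd := MeasureTheory.intervalIntegral_tendsto_integral_Ioi R hint
    (tendsto_id (α := ℝ) (x := atTop))
  refine le_of_tendsto htd.norm ?_
  filter_upwards [eventually_ge_atTop R] with S hS
  exact interval_bound hα hb hω him hR hS

lemma est {α ω : ℝ} (hα : α ∈ Ioo (0:ℝ) 1) (hω : 0 < ω) {δ R : ℝ} (hδ : 0 < δ)
    (hR : 0 < R) :
    ‖(∫ t in Ioc (0:ℝ) R, fk α ((δ:ℂ) + Complex.I * ω) t)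
      - Complex.Gamma (1 - α) * ((δ:ℂ) + Complex.I * ω) ^ ((α : ℂ) - 1)‖
      ≤ 3 * R ^ (-α) / ω := by
  set b : ℂ := (δ:ℂ) + Complex.I * ω with hbdef
  have hbre : b.re = δ := by simp [hbdef]
  have hbim : b.im = ω := by simp [hbdef]
  have hb : 0 < b.re := by rw [hbre]; exact hδ
  have hsplit : (∫ t in Ioc (0:ℝ) R, fk α b t) + ∫ t in Ioi R, fk α b t
      = ∫ t in Ioi (0:ℝ), fk α b t := by
    rw [← setIntegral_union (Ioc_disjoint_Ioi le_rfl) measurableSet_Ioi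
      ((integrable_fk hα hb).mono_set (fun x hx => hx.1))
      ((integrable_fk hα hb).mono_set (Ioi_subset_Ioi hR.le)),
      Ioc_union_Ioi_eq_Ioi hR.le]
  have h1 : (∫ t in Ioc (0:ℝ) R, fk α b t)
      - Complex.Gamma (1 - α) * b ^ ((α : ℂ) - 1) = -(∫ t in Ioi R, fk α b t) := by
    rw [← integral_fk hα hb, ← hsplit]; ring
  rw [h1, norm_neg]
  exact tail_bound hα hb hω (by rw [hbim, abs_of_pos hω]) hR

lemma est0 {α ω : ℝ} (hα : α ∈ Ioo (0:ℝ) 1) (hω : 0 < ω) {R : ℝ} (hR : 0 < R) :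
    ‖(∫ t in Ioc (0:ℝ) R, fk α (Complex.I * ω) t)
      - Complex.Gamma (1 - α) * (Complex.I * ω) ^ ((α : ℂ) - 1)‖
      ≤ 3 * R ^ (-α) / ω := by
  have hIω : (((0:ℝ):ℂ) + Complex.I * ω) = Complex.I * ω := by norm_num
  -- DCT in δ
  have hdct : Tendsto (fun δ : ℝ => ∫ t in Ioc (0:ℝ) R, fk α ((δ:ℂ) + Complex.I * ω) t)
      (nhdsWithin 0 (Ioi 0)) (nhds (∫ t in Ioc (0:ℝ) R, fk α (Complex.I * ω) t)) := by
    apply MeasureTheory.tendsto_integral_filter_of_dominated_convergence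
      (fun t => t ^ (-α))
    · exact Eventually.of_forall fun δ =>
        meas_fk α _ (fun x hx => hx.1) measurableSet_Ioc
    · filter_upwards [self_mem_nhdsWithin] with δ (hδ : 0 < δ)
      filter_upwards [ae_restrict_mem measurableSet_Ioc] with t ht
      rw [norm_fk ht.1]
      have hre : (((δ:ℂ) + Complex.I * ω)).re = δ := by simp
      rw [hre]
      nth_rewrite 2 [← mul_one (t ^ (-α))]
      gcongr
      · exact Real.rpow_nonneg ht.1.le _
      · rw [Real.exp_le_one_iff]
        nlinarith [ht.1]
    · rw [show Integrable (fun t : ℝ => t ^ (-α)) (volume.restrict (Ioc 0 R))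
          = IntegrableOn (fun t : ℝ => t ^ (-α)) (Ioc 0 R) volume from rfl,
        ← intervalIntegrable_iff_integrableOn_Ioc_of_le hR.le]
      exact intervalIntegral.intervalIntegrable_rpow' (by linarith [hα.2])
    · refine Eventually.of_forall fun t => ?_
      have hc : ContinuousAt (fun δ : ℝ => fk α ((δ:ℂ) + Complex.I * ω) t) 0 := by
        unfold fk; fun_prop
      have := hc.tendsto.mono_left (nhdsWithin_le_nhds (s := Ioi (0:ℝ)))
      rwa [hIω] at this
  have hcp : Tendsto (fun δ : ℝ =>
        Complex.Gamma (1 - α) * ((δ:ℂ) + Complex.I * ω) ^ ((α : ℂ) - 1))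
      (nhdsWithin 0 (Ioi 0))
      (nhds (Complex.Gamma (1 - α) * (Complex.I * ω) ^ ((α : ℂ) - 1))) := by
    apply Tendsto.const_mul
    have hcont : ContinuousAt (fun z : ℂ => z ^ ((α:ℂ) - 1)) (Complex.I * ω) :=
      continuousAt_cpow_const (Complex.mem_slitPlane_iff.mpr (Or.inr (by simp [hω.ne'])))
    have hδt : Tendsto (fun δ : ℝ => ((δ:ℂ) + Complex.I * ω))
        (nhdsWithin 0 (Ioi 0)) (nhds (Complex.I * ω)) := by
      have hc2 : ContinuousAt (fun δ : ℝ => ((δ:ℂ) + Complex.I * ω)) 0 := by fun_prop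
      have := hc2.tendsto.mono_left (nhdsWithin_le_nhds (s := Ioi (0:ℝ)))
      rwa [hIω] at this
    exact hcont.tendsto.comp hδt
  have hlim := (hdct.sub hcp).norm
  refine le_of_tendsto hlim ?_
  filter_upwards [self_mem_nhdsWithin] with δ (hδ : 0 < δ)
  exact est hα hω hδ hR

lemma Lval {α ω : ℝ} (hα : α ∈ Ioo (0:ℝ) 1) (hω : 0 < ω) :
    Complex.Gamma (1 - (α:ℂ)) * (Complex.I * ω) ^ ((α : ℂ) - 1)
      = Complex.Gamma (1 - (α : ℂ)) * ((ω ^ (α - 1) : ℝ) : ℂ) *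
        Complex.exp (Complex.I * (Real.pi : ℂ) * ((α : ℂ) - 1) / 2) := by
  rw [mul_assoc]
  congr 1
  have hne : Complex.I * (ω:ℂ) ≠ 0 := by
    simp [Complex.I_ne_zero, Complex.ofReal_ne_zero, hω.ne']
  rw [Complex.cpow_def_of_ne_zero hne]
  have hlog : Complex.log (Complex.I * ω) = ((Real.log ω : ℝ) : ℂ) + ((π/2 : ℝ) : ℂ) * Complex.I := by
    apply Complex.ext
    · rw [Complex.log_re]
      simp [abs_of_pos hω]
    · rw [Complex.log_im, mul_comm Complex.I ((ω:ℂ))]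
      rw [Complex.arg_real_mul _ hω, Complex.arg_I]
      simp
  rw [hlog, add_mul, Complex.exp_add]
  congr 1
  · rw [show ((Real.log ω : ℝ) : ℂ) * ((α:ℂ) - 1) = ((Real.log ω * (α - 1) : ℝ) : ℂ) by
      push_cast; ring, ← Complex.ofReal_exp]
    norm_cast
    rw [Real.rpow_def_of_pos hω]
  · congr 1
    push_cast
    ring

/-- For `α ∈ (0,1)` and `ω > 0`, the improper integral `∫_0^R t^{-α} e^{-iωt} dt`
converges as `R → ∞` to `Γ(1-α) · ω^{α-1} · exp(iπ(α-1)/2)`. -/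
theorem fourier_transform_frac_kernel (α ω : ℝ) (hα : α ∈ Set.Ioo (0:ℝ) 1) (hω : 0 < ω) :
    Tendsto
      (fun R : ℝ => ∫ t in Set.Ioc (0:ℝ) R,
        ((t ^ (-α) : ℝ) : ℂ) * Complex.exp (-(Complex.I * (ω : ℂ) * (t : ℂ))))
      atTop
      (nhds (Complex.Gamma (1 - (α : ℂ)) * ((ω ^ (α - 1) : ℝ) : ℂ) *
        Complex.exp (Complex.I * (Real.pi : ℂ) * ((α : ℂ) - 1) / 2))) := by
  have h0 : (fun R : ℝ => ∫ t in Set.Ioc (0:ℝ) R,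
      ((t ^ (-α) : ℝ) : ℂ) * Complex.exp (-(Complex.I * (ω : ℂ) * (t : ℂ))))
      = fun R : ℝ => ∫ t in Ioc (0:ℝ) R, fk α (Complex.I * ω) t := rfl
  rw [h0, ← Lval hα hω, tendsto_iff_norm_sub_tendsto_zero]
  apply squeeze_zero' (Eventually.of_forall fun R => norm_nonneg _)
  · filter_upwards [eventually_gt_atTop (0:ℝ)] with R hR
    exact est0 hα hω hR
  · have h1 : Tendsto (fun R : ℝ => 3 * R ^ (-α) / ω) atTop (nhds (3 * 0 / ω)) :=
      ((tendsto_rpow_neg_atTop hα.1).const_mul 3).div_const ω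
    simpa using h1
end

section
/- For every real c > 0, ∫_0^1 ∫_0^1 [ e^{c(x+y)} + e^{c|x−y|} + e^{c(2−x−y)} + e^{c(2−|x−y|)} ] dx dy = 2(e^{2c} − 1)/c. -/
open MeasureTheory Real

lemma exp_lin_integral (q a b : ℝ) (hq : q ≠ 0) :
    ∫ y in a..b, Real.exp (q * y) = (Real.exp (q * b) - Real.exp (q * a)) / q := by
  have h : ∀ y ∈ Set.uIcc a b,
      HasDerivAt (fun y => Real.exp (q * y) / q) (Real.exp (q * y)) y := by
    intro y _
    have h1 : HasDerivAt (fun y : ℝ => q * y) q y := by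
      simpa using (hasDerivAt_id y).const_mul q
    have h2 := h1.exp.div_const q
    simpa [mul_div_assoc, mul_div_cancel_right₀ _ hq] using h2
  rw [intervalIntegral.integral_eq_sub_of_hasDerivAt h
    ((Real.continuous_exp.comp (continuous_const.mul continuous_id)).intervalIntegrable a b)]
  ring

/-- Exact evaluation of the double integral of the four real exponentials appearing in
the estimate of the `L²` norm of the frequency-domain Green function. -/
theorem four_exponentials_integral (c : ℝ) (hc : 0 < c) :
    (∫ x in (0:ℝ)..1, ∫ y in (0:ℝ)..1,
        (Real.exp (c * (x + y)) + Real.exp (c * |x - y|)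
          + Real.exp (c * (2 - x - y)) + Real.exp (c * (2 - |x - y|))))
      = 2 * (Real.exp (2 * c) - 1) / c := by
  have hc' : c ≠ 0 := hc.ne'
  have key : Set.EqOn
      (fun x => ∫ y in (0:ℝ)..1,
        (Real.exp (c * (x + y)) + Real.exp (c * |x - y|)
          + Real.exp (c * (2 - x - y)) + Real.exp (c * (2 - |x - y|))))
      (fun _ => 2 * (Real.exp (2 * c) - 1) / c) (Set.uIcc (0:ℝ) 1) := by
    intro x hx
    rw [Set.uIcc_of_le zero_le_one] at hx
    obtain ⟨hx0, hx1⟩ := hx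
    have hcont : Continuous (fun y : ℝ =>
        Real.exp (c * (x + y)) + Real.exp (c * |x - y|)
          + Real.exp (c * (2 - x - y)) + Real.exp (c * (2 - |x - y|))) := by
      continuity
    have hce : ∀ q : ℝ, Continuous (fun y : ℝ => Real.exp (q * y)) := fun q =>
      Real.continuous_exp.comp (continuous_const.mul continuous_id)
    simp only
    rw [← intervalIntegral.integral_add_adjacent_intervals (a := (0:ℝ)) (b := x) (c := 1)
      (hcont.intervalIntegrable _ _) (hcont.intervalIntegrable _ _)]
    have hu0 : Real.exp (c * x) ≠ 0 := (Real.exp_pos _).ne'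
    have hv0 : Real.exp c ≠ 0 := (Real.exp_pos _).ne'
    have e1 : (∫ y in (0:ℝ)..x,
        (Real.exp (c * (x + y)) + Real.exp (c * |x - y|)
          + Real.exp (c * (2 - x - y)) + Real.exp (c * (2 - |x - y|))))
        = ∫ y in (0:ℝ)..x,
          ((Real.exp (c * x) + Real.exp c * Real.exp c / Real.exp (c * x))
            * (Real.exp (c * y) + Real.exp ((-c) * y))) := by
      apply intervalIntegral.integral_congr
      intro y hy
      rw [Set.uIcc_of_le hx0] at hy
      have habs : |x - y| = x - y := abs_of_nonneg (by linarith [hy.2])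
      have hy0 : Real.exp (c * y) ≠ 0 := (Real.exp_pos _).ne'
      dsimp only
      rw [habs,
        show c * (x + y) = c * x + c * y by ring,
        show c * (x - y) = c * x - c * y by ring,
        show c * (2 - x - y) = (c + c) - c * x - c * y by ring,
        show c * (2 - (x - y)) = ((c + c) - c * x) + c * y by ring,
        show (-c) * y = -(c * y) by ring]
      simp only [Real.exp_add, Real.exp_sub, Real.exp_neg]
      field_simp
      ring
    have e2 : (∫ y in x..(1:ℝ),
        (Real.exp (c * (x + y)) + Real.exp (c * |x - y|)
          + Real.exp (c * (2 - x - y)) + Real.exp (c * (2 - |x - y|))))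
        = ∫ y in x..(1:ℝ),
          ((Real.exp (c * x) + (Real.exp (c * x))⁻¹) * Real.exp (c * y)
            + (Real.exp c * Real.exp c / Real.exp (c * x)
                + Real.exp c * Real.exp c * Real.exp (c * x)) * Real.exp ((-c) * y)) := by
      apply intervalIntegral.integral_congr
      intro y hy
      rw [Set.uIcc_of_le hx1] at hy
      have habs : |x - y| = y - x := by
        rw [abs_sub_comm]; exact abs_of_nonneg (by linarith [hy.1])
      have hy0 : Real.exp (c * y) ≠ 0 := (Real.exp_pos _).ne'
      dsimp only
      rw [habs,
        show c * (x + y) = c * x + c * y by ring,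
        show c * (y - x) = c * y - c * x by ring,
        show c * (2 - x - y) = (c + c) - c * x - c * y by ring,
        show c * (2 - (y - x)) = ((c + c) + c * x) - c * y by ring,
        show (-c) * y = -(c * y) by ring]
      simp only [Real.exp_add, Real.exp_sub, Real.exp_neg]
      field_simp
      ring
    rw [e1, e2, intervalIntegral.integral_const_mul,
      intervalIntegral.integral_add ((hce c).intervalIntegrable _ _)
        ((hce (-c)).intervalIntegrable _ _),
      intervalIntegral.integral_add (f := fun y : ℝ =>
          (Real.exp (c * x) + (Real.exp (c * x))⁻¹) * Real.exp (c * y))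
        (g := fun y : ℝ => (Real.exp c * Real.exp c / Real.exp (c * x)
            + Real.exp c * Real.exp c * Real.exp (c * x)) * Real.exp ((-c) * y))
        ((continuous_const.mul (hce c)).intervalIntegrable _ _)
        ((continuous_const.mul (hce (-c))).intervalIntegrable _ _),
      intervalIntegral.integral_const_mul, intervalIntegral.integral_const_mul,
      exp_lin_integral c 0 x hc', exp_lin_integral (-c) 0 x (neg_ne_zero.mpr hc'),
      exp_lin_integral c x 1 hc', exp_lin_integral (-c) x 1 (neg_ne_zero.mpr hc')]
    have h2c : Real.exp (2 * c) = Real.exp c * Real.exp c := by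
      rw [two_mul, Real.exp_add]
    simp only [neg_mul, Real.exp_neg, mul_zero, mul_one, Real.exp_zero, h2c]
    have hvi : (Real.exp c)⁻¹ ≠ 0 := inv_ne_zero hv0
    field_simp
    ring
  rw [intervalIntegral.integral_congr key]
  simp
end

section
/- Let α ∈ (0,1). There exists a constant C > 0, independent of ω, such that for every ω ≠ 0, with √s := |ω|^{α/2} exp(iπα·sgn(ω)/4) ∈ ℂ, the Green function g_ω(x,y) := [e^{√s(x+y)} + e^{√s|x−y|} − e^{√s(2−x−y)} − e^{√s(2−|x−y|)}] / (2√s(1 + e^{2√s})) satisfies ∫_0^1 ∫_0^1 |g_ω(x,y)|² dx dy ≤ C·|ω|^{−α}. -/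
open MeasureTheory Real

/-- `√s(ω) = |ω|^{α/2} exp(iπα·sgn(ω)/4)`. -/
noncomputable def sqrtS (α ω : ℝ) : ℂ :=
  ((|ω| ^ (α / 2) : ℝ) : ℂ) *
    Complex.exp (Complex.I * (Real.pi : ℂ) * (α : ℂ) * ((Real.sign ω : ℝ) : ℂ) / 4)

/-- The frequency-domain Green function `g_ω(x,y)` for `ω ≠ 0`. -/
noncomputable def greenFn (α ω x y : ℝ) : ℂ :=
  (Complex.exp (sqrtS α ω * ((x : ℂ) + (y : ℂ)))
    + Complex.exp (sqrtS α ω * ((|x - y| : ℝ) : ℂ))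
    - Complex.exp (sqrtS α ω * (2 - (x : ℂ) - (y : ℂ)))
    - Complex.exp (sqrtS α ω * (2 - ((|x - y| : ℝ) : ℂ))))
  / (2 * sqrtS α ω * (1 + Complex.exp (2 * sqrtS α ω)))

lemma sqrtS_norm (α ω : ℝ) : ‖sqrtS α ω‖ = |ω| ^ (α / 2) := by
  have h : (Complex.I * (Real.pi : ℂ) * (α : ℂ) * ((Real.sign ω : ℝ) : ℂ) / 4).re = 0 := by
    simp [Complex.div_re]
  rw [sqrtS, norm_mul, Complex.norm_exp, h,
    Real.exp_zero, mul_one, Complex.norm_real, Real.norm_eq_abs, abs_of_nonneg (Real.rpow_nonneg (abs_nonneg ω) _)]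

lemma sqrtS_re (α ω : ℝ) (hω : ω ≠ 0) :
    (sqrtS α ω).re = |ω| ^ (α / 2) * Real.cos (Real.pi * α / 4) := by
  have h1 : (Complex.I * (Real.pi : ℂ) * (α : ℂ) * ((Real.sign ω : ℝ) : ℂ) / 4) =
      ((Real.pi * α * (Real.sign ω) / 4 : ℝ) : ℂ) * Complex.I := by
    push_cast; ring
  have h2 : (sqrtS α ω).re = |ω| ^ (α / 2) * Real.cos (Real.pi * α * (Real.sign ω) / 4) := by
    rw [sqrtS, h1, Complex.re_ofReal_mul, Complex.exp_ofReal_mul_I_re]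
  rw [h2]
  rcases Real.sign_apply_eq_of_ne_zero ω hω with h | h <;> rw [h]
  · rw [show Real.pi * α * (-1) / 4 = -(Real.pi * α / 4) by ring, Real.cos_neg]
  · ring_nf


lemma aux_norm_exp_sub_one_le (w : ℂ) : ‖Complex.exp w - 1‖ ≤ ‖w‖ * Real.exp ‖w‖ := by
  have hderiv : ∀ t : ℝ, t ∈ Set.Icc (0:ℝ) 1 →
      HasDerivWithinAt (fun t : ℝ => Complex.exp ((t:ℂ) * w)) (w * Complex.exp ((t:ℂ) * w)) (Set.Icc 0 1) t := by
    intro t ht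
    have h1 : HasDerivAt (fun z : ℂ => Complex.exp (z * w)) (Complex.exp ((t:ℂ) * w) * w) (t:ℂ) :=
      HasDerivAt.comp (t:ℂ) (Complex.hasDerivAt_exp ((t:ℂ) * w))
        (by simpa using (hasDerivAt_id ((t:ℂ))).mul_const w)
    simpa [mul_comm] using h1.comp_ofReal.hasDerivWithinAt
  have hbound : ∀ t : ℝ, t ∈ Set.Icc (0:ℝ) 1 →
      ‖w * Complex.exp ((t:ℂ) * w)‖ ≤ ‖w‖ * Real.exp ‖w‖ := by
    intro t ht
    rw [norm_mul, Complex.norm_exp]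
    refine mul_le_mul_of_nonneg_left (Real.exp_le_exp.2 ?_) (norm_nonneg _)
    have : ((t:ℂ) * w).re = t * w.re := by simp
    rw [this]
    calc t * w.re ≤ t * |w.re| := by
          exact mul_le_mul_of_nonneg_left (le_abs_self _) ht.1
      _ ≤ 1 * ‖w‖ := by
          refine mul_le_mul ht.2 (Complex.abs_re_le_norm w) (abs_nonneg _) zero_le_one
      _ = ‖w‖ := one_mul _
  have := (convex_Icc (0:ℝ) 1).norm_image_sub_le_of_norm_hasDerivWithin_le hderiv hbound
    (Set.left_mem_Icc.2 zero_le_one) (Set.right_mem_Icc.2 zero_le_one)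
  simpa using this

set_option maxHeartbeats 1000000 in
lemma greenFn_pointwise (α ω : ℝ) (hα : α ∈ Set.Ioo (0:ℝ) 1) (hω : ω ≠ 0)
    {x y : ℝ} (hx : x ∈ Set.Icc (0:ℝ) 1) (hy : y ∈ Set.Icc (0:ℝ) 1) :
    ‖greenFn α ω x y‖ ≤ 2 * Real.exp 6 / |ω| ^ (α / 2) := by
  obtain ⟨hα0, hα1⟩ := hα
  obtain ⟨hx0, hx1⟩ := hx
  obtain ⟨hy0, hy1⟩ := hy
  set r := |ω| ^ (α / 2) with hr_def
  have hωpos : 0 < |ω| := abs_pos.2 hω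
  have hr : 0 < r := Real.rpow_pos_of_pos hωpos _
  set c := Real.cos (Real.pi * α / 4) with hc_def
  have hc1 : c ≤ 1 := Real.cos_le_one _
  have hc2 : 1/2 < c := by
    have h3 : Real.pi * α / 4 < Real.pi / 3 := by nlinarith [Real.pi_pos]
    have := Real.cos_lt_cos_of_nonneg_of_le_pi (by positivity)
      (by linarith [Real.pi_pos] : Real.pi / 3 ≤ Real.pi)
      h3
    rw [Real.cos_pi_div_three] at this
    exact this
  set z := sqrtS α ω with hz_def
  have hz_norm : ‖z‖ = r := sqrtS_norm α ω
  have hz_re : z.re = r * c := sqrtS_re α ω hω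
  have hrc : 0 < r * c := by nlinarith
  have hexp : ∀ t : ℝ, ‖Complex.exp (z * (t : ℂ))‖ = Real.exp (r * c * t) := by
    intro t
    rw [Complex.norm_exp]
    congr 1
    simp [Complex.mul_re, hz_re]
  have hG : greenFn α ω x y =
      (Complex.exp (z * ((x + y : ℝ) : ℂ)) - Complex.exp (z * ((2 - x - y : ℝ) : ℂ))
        + (Complex.exp (z * ((|x - y| : ℝ) : ℂ)) - Complex.exp (z * ((2 - |x - y| : ℝ) : ℂ))))
      / (2 * z * (1 + Complex.exp (2 * z))) := by
    rw [greenFn, ← hz_def]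
    push_cast
    ring_nf
  -- denominator bound
  have hden_eq : ‖2 * z * (1 + Complex.exp (2 * z))‖ = 2 * r * ‖1 + Complex.exp (2 * z)‖ := by
    rw [norm_mul, norm_mul, hz_norm]
    norm_num
  have hexp2z : ‖Complex.exp (2 * z)‖ = Real.exp (2 * (r * c)) := by
    rw [Complex.norm_exp]
    congr 1
    simp [Complex.mul_re, hz_re]
  have hden_ge : 2 * r * (Real.exp (2 * (r * c)) - 1) ≤ ‖2 * z * (1 + Complex.exp (2 * z))‖ := by
    rw [hden_eq]
    have h1 : ‖Complex.exp (2 * z)‖ - ‖(-1 : ℂ)‖ ≤ ‖Complex.exp (2 * z) - (-1)‖ :=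
      norm_sub_norm_le _ _
    rw [norm_neg, norm_one, sub_neg_eq_add, add_comm] at h1
    rw [hexp2z] at h1
    nlinarith
  have hden_pos : (0:ℝ) < 2 * r * (Real.exp (2 * (r * c)) - 1) := by
    nlinarith [Real.add_one_le_exp (2 * (r * c))]
  have habs_xy : |x - y| ≤ 1 := abs_le.2 ⟨by linarith, by linarith⟩
  have habs_xy0 : 0 ≤ |x - y| := abs_nonneg _
  rw [hG, norm_div]
  rcases le_total (r * c) 1 with hcase | hcase
  · -- small frequency: use cancellation in the numerator
    have hr2 : r ≤ 2 := by nlinarith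
    have pair : ∀ a b : ℝ, b ≤ 2 → |a - b| ≤ 2 →
        ‖Complex.exp (z * (a:ℂ)) - Complex.exp (z * (b:ℂ))‖ ≤ 2 * r * Real.exp 6 := by
      intro a b hb2 hab
      have hsplit : Complex.exp (z * (a:ℂ)) - Complex.exp (z * (b:ℂ))
          = Complex.exp (z * (b:ℂ)) * (Complex.exp (z * ((a - b : ℝ):ℂ)) - 1) := by
        rw [mul_sub, mul_one, ← Complex.exp_add]
        push_cast
        ring_nf
      rw [hsplit, norm_mul, hexp b]
      have h1 := aux_norm_exp_sub_one_le (z * ((a - b : ℝ):ℂ))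
      have h2 : ‖z * ((a - b : ℝ):ℂ)‖ = r * |a - b| := by
        rw [norm_mul, hz_norm, Complex.norm_real, Real.norm_eq_abs]
      rw [h2] at h1
      have e1 : Real.exp (r * c * b) ≤ Real.exp 2 := by
        apply Real.exp_le_exp.2
        nlinarith [mul_le_mul_of_nonneg_left hb2 hrc.le]
      have e3 : ‖Complex.exp (z * ((a - b : ℝ):ℂ)) - 1‖ ≤ 2 * r * Real.exp 4 := by
        refine h1.trans (mul_le_mul ?_ (Real.exp_le_exp.2 ?_) (Real.exp_pos _).le (by positivity))
        · nlinarith [abs_nonneg (a - b)]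
        · nlinarith [abs_nonneg (a - b)]
      calc Real.exp (r * c * b) * ‖Complex.exp (z * ((a - b : ℝ):ℂ)) - 1‖
          ≤ Real.exp 2 * (2 * r * Real.exp 4) :=
            mul_le_mul e1 e3 (norm_nonneg _) (Real.exp_pos _).le
        _ = 2 * r * Real.exp 6 := by
            rw [show (6:ℝ) = 2 + 4 by norm_num, Real.exp_add]; ring
    have p1 := pair (x + y) (2 - x - y) (by linarith) (abs_le.2 ⟨by linarith, by linarith⟩)
    have p2 := pair |x - y| (2 - |x - y|) (by linarith) (abs_le.2 ⟨by linarith, by linarith⟩)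
    have hnum : ‖Complex.exp (z * ((x + y : ℝ) : ℂ)) - Complex.exp (z * ((2 - x - y : ℝ) : ℂ))
        + (Complex.exp (z * ((|x - y| : ℝ) : ℂ)) - Complex.exp (z * ((2 - |x - y| : ℝ) : ℂ)))‖
        ≤ 4 * r * Real.exp 6 := by
      refine (norm_add_le _ _).trans ?_
      linarith
    have hden2 : 2 * r ^ 2 ≤ ‖2 * z * (1 + Complex.exp (2 * z))‖ := by
      refine le_trans ?_ hden_ge
      nlinarith [Real.add_one_le_exp (2 * (r * c))]
    calc _ ≤ (4 * r * Real.exp 6) / (2 * r ^ 2) := by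
          apply div_le_div₀ (by positivity) hnum (by positivity) hden2
      _ = 2 * Real.exp 6 / r := by
          field_simp
          ring
  · -- large frequency: crude bound on the numerator
    have hterm : ∀ t : ℝ, t ≤ 2 → ‖Complex.exp (z * (t:ℂ))‖ ≤ Real.exp (2 * (r * c)) := by
      intro t ht
      rw [hexp t]
      apply Real.exp_le_exp.2
      nlinarith [mul_le_mul_of_nonneg_left ht hrc.le]
    have hnum : ‖Complex.exp (z * ((x + y : ℝ) : ℂ)) - Complex.exp (z * ((2 - x - y : ℝ) : ℂ))
        + (Complex.exp (z * ((|x - y| : ℝ) : ℂ)) - Complex.exp (z * ((2 - |x - y| : ℝ) : ℂ)))‖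
        ≤ 4 * Real.exp (2 * (r * c)) := by
      have t1 := hterm (x + y) (by linarith)
      have t2 := hterm (2 - x - y) (by linarith)
      have t3 := hterm |x - y| (by linarith)
      have t4 := hterm (2 - |x - y|) (by linarith)
      calc _ ≤ ‖Complex.exp (z * ((x + y : ℝ) : ℂ)) - Complex.exp (z * ((2 - x - y : ℝ) : ℂ))‖
            + ‖Complex.exp (z * ((|x - y| : ℝ) : ℂ)) - Complex.exp (z * ((2 - |x - y| : ℝ) : ℂ))‖ :=
            norm_add_le _ _
        _ ≤ _ := by
            have s1 := norm_sub_le (Complex.exp (z * ((x + y : ℝ) : ℂ)))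
              (Complex.exp (z * ((2 - x - y : ℝ) : ℂ)))
            have s2 := norm_sub_le (Complex.exp (z * ((|x - y| : ℝ) : ℂ)))
              (Complex.exp (z * ((2 - |x - y| : ℝ) : ℂ)))
            linarith
    have hden2 : r * Real.exp (2 * (r * c)) ≤ ‖2 * z * (1 + Complex.exp (2 * z))‖ := by
      refine le_trans ?_ hden_ge
      nlinarith [Real.add_one_le_exp (2 * (r * c))]
    have hE : (0:ℝ) < Real.exp (2 * (r * c)) := Real.exp_pos _
    calc _ ≤ (4 * Real.exp (2 * (r * c))) / (r * Real.exp (2 * (r * c))) := by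
          apply div_le_div₀ (by positivity) hnum (by positivity) hden2
      _ = 4 / r := by
          field_simp
      _ ≤ 2 * Real.exp 6 / r := by
          have h46 : (4:ℝ) ≤ 2 * Real.exp 6 := by nlinarith [Real.add_one_le_exp (6:ℝ)]
          gcongr


/-- There is a constant `C > 0`, independent of `ω`, such that for every `ω ≠ 0` the
Green function satisfies `∫_0^1 ∫_0^1 |g_ω(x,y)|² dx dy ≤ C |ω|^{−α}`. -/
theorem greenFn_L2_decay (α : ℝ) (hα : α ∈ Set.Ioo (0:ℝ) 1) :
    ∃ C > 0, ∀ ω : ℝ, ω ≠ 0 →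
      (∫ x in (0:ℝ)..1, ∫ y in (0:ℝ)..1, ‖greenFn α ω x y‖ ^ 2) ≤ C * |ω| ^ (-α) := by
  refine ⟨(2 * Real.exp 6) ^ 2, by positivity, ?_⟩
  intro ω hω
  have hωpos : 0 < |ω| := abs_pos.2 hω
  have hr : 0 < |ω| ^ (α / 2) := Real.rpow_pos_of_pos hωpos _
  set K := 2 * Real.exp 6 / |ω| ^ (α / 2) with hK
  have hKpos : 0 < K := by positivity
  have hcont : Continuous (fun p : ℝ × ℝ => ‖greenFn α ω p.1 p.2‖ ^ 2) := by
    apply Continuous.pow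
    apply Continuous.norm
    unfold greenFn
    apply Continuous.div_const
    fun_prop
  have hint_inner : ∀ x : ℝ, IntervalIntegrable (fun y => ‖greenFn α ω x y‖ ^ 2) volume 0 1 :=
    fun x => (hcont.comp (Continuous.prodMk_right x)).intervalIntegrable 0 1
  have hFcont : Continuous (fun x : ℝ => ∫ y in (0:ℝ)..1, ‖greenFn α ω x y‖ ^ 2) :=
    intervalIntegral.continuous_parametric_intervalIntegral_of_continuous'
      (f := fun x y => ‖greenFn α ω x y‖ ^ 2) hcont 0 1
  have key : (∫ x in (0:ℝ)..1, ∫ y in (0:ℝ)..1, ‖greenFn α ω x y‖ ^ 2) ≤ K ^ 2 := by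
    calc (∫ x in (0:ℝ)..1, ∫ y in (0:ℝ)..1, ‖greenFn α ω x y‖ ^ 2)
        ≤ ∫ _x in (0:ℝ)..1, K ^ 2 := by
          apply intervalIntegral.integral_mono_on zero_le_one
            (hFcont.intervalIntegrable 0 1) intervalIntegrable_const
          intro x hx
          calc (∫ y in (0:ℝ)..1, ‖greenFn α ω x y‖ ^ 2) ≤ ∫ _y in (0:ℝ)..1, K ^ 2 := by
                apply intervalIntegral.integral_mono_on zero_le_one
                  (hint_inner x) intervalIntegrable_const
                intro y hy
                exact pow_le_pow_left₀ (norm_nonneg _)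
                  (greenFn_pointwise α ω hα hω hx hy) 2
            _ = K ^ 2 := by simp
      _ = K ^ 2 := by simp
  refine key.trans (le_of_eq ?_)
  rw [hK, div_pow]
  have h2 : (|ω| ^ (α / 2)) ^ 2 = |ω| ^ α := by
    rw [← Real.rpow_natCast (|ω| ^ (α / 2)) 2, ← Real.rpow_mul (abs_nonneg ω)]
    norm_num
  rw [h2, Real.rpow_neg (abs_nonneg ω), div_eq_mul_inv]
end

section
/- Let a > 0 and b ≠ 0 be real numbers and set z := a + ib ∈ ℂ. Then ∫_0^1 | e^{z y} − e^{z(2−y)} |² dy = (e^{4a} − 1)/(2a) − e^{2a} · sin(2b)/b. -/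
open MeasureTheory Real

lemma numerator_ptwise (a b y : ℝ) :
    ‖Complex.exp (((a : ℂ) + (b : ℂ) * Complex.I) * (y : ℂ))
      - Complex.exp (((a : ℂ) + (b : ℂ) * Complex.I) * (2 - (y : ℂ)))‖ ^ 2
    = Real.exp (2*a*y) + Real.exp (2*a*(2-y)) - 2 * Real.exp (2*a) * Real.cos (2*b*(y-1)) := by
  rw [Complex.sq_norm]
  simp only [Complex.normSq_apply, Complex.exp_re, Complex.exp_im, Complex.mul_re,
    Complex.mul_im, Complex.add_re, Complex.add_im, Complex.sub_re, Complex.sub_im,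
    Complex.ofReal_re, Complex.ofReal_im, Complex.I_re, Complex.I_im,
    Complex.re_ofNat, Complex.im_ofNat]
  ring_nf
  have h1 : Real.cos (b*y) ^2 + Real.sin (b*y)^2 = 1 := Real.cos_sq_add_sin_sq _
  have h2 : Real.cos (b*2-b*y) ^2 + Real.sin (b*2-b*y)^2 = 1 := Real.cos_sq_add_sin_sq _
  have h3 : Real.cos (-(b*2)+b*y*2) = Real.cos (b*y) * Real.cos (b*2-b*y) + Real.sin (b*y) * Real.sin (b*2-b*y) := by
    rw [show -(b*2)+b*y*2 = (b*y)-(b*2-b*y) by ring]; exact Real.cos_sub _ _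
  have h4 : Real.exp (a*y) * Real.exp (a*2-a*y) = Real.exp (a*2) := by
    rw [← Real.exp_add]; congr 1; ring
  have h5 : Real.exp (a*y) ^ 2 = Real.exp (a*y*2) := by
    rw [sq, ← Real.exp_add]; congr 1; ring
  have h6 : Real.exp (a*2-a*y) ^ 2 = Real.exp (a*4-a*y*2) := by
    rw [sq, ← Real.exp_add]; congr 1; ring
  linear_combination (Real.exp (a*y))^2 * h1 + (Real.exp (a*2-a*y))^2 * h2 + h5 + h6
    - 2*(Real.cos (b*y)*Real.cos (b*2-b*y)+Real.sin (b*y)*Real.sin (b*2-b*y)) * h4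
    + 2*Real.exp (a*2) * h3

lemma numerator_integral (a b : ℝ) (ha : 0 < a) (hb : b ≠ 0) :
    (∫ y in (0:ℝ)..1, (Real.exp (2*a*y) + Real.exp (2*a*(2-y)) - 2 * Real.exp (2*a) * Real.cos (2*b*(y-1))))
      = (Real.exp (4 * a) - 1) / (2 * a) - Real.exp (2 * a) * Real.sin (2 * b) / b := by
  have ha' : (2*a) ≠ 0 := by positivity
  set F : ℝ → ℝ := fun y => Real.exp (2*a*y)/(2*a) - Real.exp (2*a*(2-y))/(2*a)
      - Real.exp (2*a) * Real.sin (2*b*(y-1)) / b with hF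
  have hderiv : ∀ x ∈ Set.uIcc (0:ℝ) 1, HasDerivAt F
      (Real.exp (2*a*x) + Real.exp (2*a*(2-x)) - 2 * Real.exp (2*a) * Real.cos (2*b*(x-1))) x := by
    intro x _
    have l1 : HasDerivAt (fun y : ℝ => 2*a*y) (2*a) x := by
      simpa using (hasDerivAt_id x).const_mul (2*a)
    have l2 : HasDerivAt (fun y : ℝ => 2*a*(2-y)) (-(2*a)) x := by
      have : HasDerivAt (fun y : ℝ => (2:ℝ)-y) (-1) x := by
        simpa using (hasDerivAt_id x).const_sub 2
      simpa using this.const_mul (2*a)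
    have l3 : HasDerivAt (fun y : ℝ => 2*b*(y-1)) (2*b) x := by
      have : HasDerivAt (fun y : ℝ => y-(1:ℝ)) 1 x := by
        simpa using (hasDerivAt_id x).sub_const 1
      simpa using this.const_mul (2*b)
    have d1 := (l1.exp).div_const (2*a)
    have d2 := (l2.exp).div_const (2*a)
    have d3 := ((l3.sin).const_mul (Real.exp (2*a))).div_const b
    have := (d1.sub d2).sub d3
    refine HasDerivAt.congr_deriv this ?_
    field_simp
    ring
  have hcont : IntervalIntegrable
      (fun x => Real.exp (2*a*x) + Real.exp (2*a*(2-x)) - 2 * Real.exp (2*a) * Real.cos (2*b*(x-1)))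
      volume 0 1 := by
    apply Continuous.intervalIntegrable
    continuity
  rw [intervalIntegral.integral_eq_sub_of_hasDerivAt hderiv hcont]
  simp only [hF]
  norm_num
  field_simp
  ring_nf

/-- For `a > 0`, `b ≠ 0` and `z = a + ib`, the exact evaluation
`∫_0^1 |e^{zy} − e^{z(2−y)}|² dy = (e^{4a} − 1)/(2a) − e^{2a} sin(2b)/b`. -/
theorem numerator_L2_norm (a b : ℝ) (ha : 0 < a) (hb : b ≠ 0) :
    (∫ y in (0:ℝ)..1,
        ‖Complex.exp (((a : ℂ) + (b : ℂ) * Complex.I) * (y : ℂ))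
          - Complex.exp (((a : ℂ) + (b : ℂ) * Complex.I) * (2 - (y : ℂ)))‖ ^ 2)
      = (Real.exp (4 * a) - 1) / (2 * a) - Real.exp (2 * a) * Real.sin (2 * b) / b := by
  simp only [numerator_ptwise]
  exact numerator_integral a b ha hb
end

section
/- For every real k > 0, the function l₂(k) := (2k − 1) e^{2k} − 2k² e^{k} + 1 satisfies l₂(k) > 0. -/
open Real

lemma l2_hasDeriv (x : ℝ) :
    HasDerivAt (fun k : ℝ => (2 * k - 1) * Real.exp (2 * k) - 2 * k ^ 2 * Real.exp k + 1)
      (4 * x * Real.exp (2 * x) - (4 * x + 2 * x ^ 2) * Real.exp x) x := by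
  have h1 : HasDerivAt (fun k : ℝ => Real.exp (2 * k)) (2 * Real.exp (2 * x)) x := by
    have := ((hasDerivAt_id x).const_mul 2).exp
    simpa [mul_comm] using this
  have h2 : HasDerivAt (fun k : ℝ => (2 * k - 1) * Real.exp (2 * k))
      (2 * Real.exp (2 * x) + (2 * x - 1) * (2 * Real.exp (2 * x))) x := by
    have := (((hasDerivAt_id x).const_mul 2).sub_const 1).fun_mul h1
    exact this.congr_deriv (by simp)
  have h3 : HasDerivAt (fun k : ℝ => 2 * k ^ 2 * Real.exp k)
      ((2 * (2 * x)) * Real.exp x + 2 * x ^ 2 * Real.exp x) x := by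
    exact (((hasDerivAt_pow 2 x).const_mul 2)).mul (Real.hasDerivAt_exp x) |>.congr_deriv (by ring)
  have := (h2.fun_sub h3).add_const 1
  exact this.congr_deriv (by ring)

/-- For every `k > 0`, `l₂(k) = (2k − 1)e^{2k} − 2k²e^{k} + 1 > 0`. -/
theorem l2_pos (k : ℝ) (hk : 0 < k) :
    0 < (2 * k - 1) * Real.exp (2 * k) - 2 * k ^ 2 * Real.exp k + 1 := by
  set f : ℝ → ℝ := fun k => (2 * k - 1) * Real.exp (2 * k) - 2 * k ^ 2 * Real.exp k + 1 with hf
  have hmono : StrictMonoOn f (Set.Ici 0) := by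
    apply strictMonoOn_of_deriv_pos (convex_Ici 0)
    · fun_prop
    · intro x hx
      rw [interior_Ici] at hx
      rw [(l2_hasDeriv x).deriv]
      have hx0 : (0:ℝ) < x := hx
      have he : Real.exp (2 * x) = Real.exp x * Real.exp x := by
        rw [← Real.exp_add]; ring_nf
      rw [he]
      have hgt : 2 + x < 2 * Real.exp x := by
        have := Real.add_one_lt_exp (x := x) (by positivity)
        nlinarith
      have hexp : 0 < Real.exp x := Real.exp_pos x
      nlinarith [mul_pos hx0 hexp]
  have h0 : f 0 = 0 := by simp [hf]
  have := hmono (Set.self_mem_Ici) (Set.mem_Ici.mpr hk.le) hk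
  rw [h0] at this
  exact this
end

section
/- The function l₁ : (0,∞) → ℝ defined by l₁(k) = (e^{2k} − 1)/k − 2e^{k} is strictly increasing on (0,∞). -/
open Real

private lemma gHasDeriv (x : ℝ) :
    HasDerivAt (fun y : ℝ => 2*y*Real.exp (2*y) - Real.exp (2*y) + 1 - 2*y^2*Real.exp y)
      (2*x*Real.exp x*(2*Real.exp x - 2 - x)) x := by
  have h1 : HasDerivAt (fun y : ℝ => 2*y) 2 x := by
    simpa using (hasDerivAt_id x).const_mul 2
  have h2 : HasDerivAt (fun y : ℝ => Real.exp (2*y)) (Real.exp (2*x) * 2) x := h1.exp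
  have h3 : HasDerivAt (fun y : ℝ => 2*y*Real.exp (2*y))
      (2*Real.exp (2*x) + 2*x*(Real.exp (2*x)*2)) x := h1.mul h2
  have h4 : HasDerivAt (fun y : ℝ => y^2) (2*x) x := by
    simpa using hasDerivAt_pow 2 x
  have h5 : HasDerivAt (fun y : ℝ => 2*y^2) (2*(2*x)) x := h4.const_mul 2
  have h6 : HasDerivAt Real.exp (Real.exp x) x := Real.hasDerivAt_exp x
  have h7 : HasDerivAt (fun y : ℝ => 2*y^2*Real.exp y)
      (2*(2*x)*Real.exp x + 2*x^2*Real.exp x) x := h5.mul h6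
  have := ((h3.sub h2).add_const 1).sub h7
  refine this.congr_deriv ?_
  have hexp2 : Real.exp (2*x) = Real.exp x * Real.exp x := by
    rw [← Real.exp_add]; ring_nf
  rw [hexp2]; ring

private lemma key (x : ℝ) (hx : 0 < x) :
    0 < 2*x*Real.exp (2*x) - Real.exp (2*x) + 1 - 2*x^2*Real.exp x := by
  set g : ℝ → ℝ := fun y => 2*y*Real.exp (2*y) - Real.exp (2*y) + 1 - 2*y^2*Real.exp y with hg
  have hmono : StrictMonoOn g (Set.Ici 0) := by
    apply strictMonoOn_of_deriv_pos (convex_Ici 0)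
    · exact fun y _ => ((gHasDeriv y).continuousAt).continuousWithinAt
    · intro y hy
      rw [interior_Ici] at hy
      rw [(gHasDeriv y).deriv]
      have h1 : 0 < Real.exp y := Real.exp_pos y
      have h2 : y + 1 ≤ Real.exp y := Real.add_one_le_exp y
      have hy' : (0:ℝ) < y := hy
      have h3 : 0 < 2*Real.exp y - 2 - y := by linarith
      exact mul_pos (mul_pos (mul_pos two_pos hy') h1) h3
  have h0 : g 0 = 0 := by simp [hg]
  have := hmono (Set.self_mem_Ici) (Set.mem_Ici.mpr hx.le) hx
  rw [h0] at this
  exact this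

/-- The function `l₁(k) = (e^{2k} − 1)/k − 2e^{k}` is strictly increasing on `(0,∞)`. -/
theorem l1_strictMonoOn :
    StrictMonoOn (fun k : ℝ => (Real.exp (2 * k) - 1) / k - 2 * Real.exp k)
      (Set.Ioi 0) := by
  have hderiv : ∀ x : ℝ, 0 < x →
      HasDerivAt (fun k : ℝ => (Real.exp (2 * k) - 1) / k - 2 * Real.exp k)
        ((Real.exp (2*x) * 2 * x - (Real.exp (2*x) - 1) * 1) / x^2 - 2 * Real.exp x) x := by
    intro x hx
    have h1 : HasDerivAt (fun y : ℝ => 2*y) 2 x := by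
      simpa using (hasDerivAt_id x).const_mul 2
    have h2 : HasDerivAt (fun y : ℝ => Real.exp (2*y)) (Real.exp (2*x) * 2) x := h1.exp
    have h3 : HasDerivAt (fun y : ℝ => Real.exp (2*y) - 1) (Real.exp (2*x) * 2) x :=
      h2.sub_const 1
    have h4 : HasDerivAt (fun y : ℝ => (Real.exp (2*y) - 1) / y)
        (((Real.exp (2*x) * 2) * x - (Real.exp (2*x) - 1) * 1) / x^2) x :=
      h3.div (hasDerivAt_id x) (ne_of_gt hx)
    have h5 : HasDerivAt (fun y : ℝ => 2 * Real.exp y) (2 * Real.exp x) x :=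
      (Real.hasDerivAt_exp x).const_mul 2
    exact h4.sub h5
  apply strictMonoOn_of_deriv_pos (convex_Ioi 0)
  · intro x hx
    exact ((hderiv x hx).continuousAt).continuousWithinAt
  · intro x hx
    rw [interior_Ioi] at hx
    rw [(hderiv x hx).deriv]
    have hx' : (0:ℝ) < x := hx
    have hk := key x hx'
    have hx2 : (0:ℝ) < x^2 := by positivity
    rw [sub_pos, lt_div_iff₀ hx2]
    nlinarith [hk]
end
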